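/- Let ζ : ℝ → ℝ be a continuous even function with compact support contained in [−R, R] (R > 0), satisfying the moment conditions of order 2: for every y ∈ ℝ, ∑_{ξ∈ℤ} ζ(ξ − y)(ξ − y)^j equals 1 if j = 0 and equals 0 if j = 1, 2. Define χ_{ξ,ρ}(x) := ∫₀¹ ζ(ξ + tρ − x) dt. Then for every x ∈ ℝ and every ρ ∈ ℝ, ∑_{ξ∈ℤ} (ξ − x + ρ/2)(ξ − x) χ_{ξ,ρ}(x) = ρ²/12. -/

import Mathlib

open MeasureTheory

/-- Combined second-moment identity for the bond weight function:
`∑_{ξ∈ℤ} (ξ − x + ρ/2)(ξ − x) χ_{ξ,ρ}(x) = ρ²/12`. -/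
theorem stmt_3 (R : ℝ) (hR : 0 < R) (ζ : ℝ → ℝ) (hζc : Continuous ζ)
    (hζe : ∀ x, ζ (-x) = ζ x)
    (hζs : ∀ x, x ∉ Set.Icc (-R) R → ζ x = 0)
    (hmom : ∀ (y : ℝ) (j : ℕ), j ≤ 2 →
      ∑' ξ : ℤ, ζ ((ξ : ℝ) - y) * ((ξ : ℝ) - y) ^ j = if j = 0 then 1 else 0)
    (χ : ℤ → ℝ → ℝ → ℝ)
    (hχ : ∀ (ξ : ℤ) (ρ x : ℝ), χ ξ ρ x = ∫ t in (0:ℝ)..1, ζ ((ξ : ℝ) + t * ρ - x)) :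
    ∀ (x ρ : ℝ),
      ∑' ξ : ℤ, ((ξ : ℝ) - x + ρ / 2) * ((ξ : ℝ) - x) * χ ξ ρ x = ρ ^ 2 / 12 := by
  intro x ρ
  set A : ℝ := R + |ρ| with hA
  set m : ℤ := ⌊x - A⌋ with hm
  set M : ℤ := ⌈x + A⌉ with hM
  set S : Finset ℤ := Finset.Icc m M with hS
  -- outside S the translated ζ vanishes on [0,1]
  have hout : ∀ ξ : ℤ, ξ ∉ S → ∀ t : ℝ, t ∈ Set.Icc (0:ℝ) 1 →
      ζ ((ξ : ℝ) + t * ρ - x) = 0 := by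
    intro ξ hξ t ht
    apply hζs
    intro hmem
    obtain ⟨h1, h2⟩ := hmem
    have htρ : |t * ρ| ≤ |ρ| := by
      rw [abs_mul]
      calc |t| * |ρ| ≤ 1 * |ρ| := by
            apply mul_le_mul_of_nonneg_right _ (abs_nonneg _)
            rw [abs_of_nonneg ht.1]; exact ht.2
        _ = |ρ| := one_mul _
    have htρ1 : t * ρ ≤ |ρ| := le_trans (le_abs_self _) htρ
    have htρ2 : -|ρ| ≤ t * ρ := by
      have := neg_abs_le (t * ρ); linarith [neg_le_neg htρ]
    rw [hS, Finset.mem_Icc, not_and_or] at hξ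
    rcases hξ with h | h
    · push_neg at h
      have h' : (ξ : ℝ) ≤ (m : ℝ) - 1 := by
        have : ξ ≤ m - 1 := by omega
        exact_mod_cast this
      have hfl : (m : ℝ) ≤ x - A := Int.floor_le _
      rw [hA] at hfl
      linarith
    · push_neg at h
      have h' : (M : ℝ) + 1 ≤ (ξ : ℝ) := by
        have : M + 1 ≤ ξ := by omega
        exact_mod_cast this
      have hcl : x + A ≤ (M : ℝ) := Int.le_ceil _
      rw [hA] at hcl
      linarith
  -- χ vanishes outside S
  have hχ0 : ∀ ξ : ℤ, ξ ∉ S → χ ξ ρ x = 0 := by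
    intro ξ hξ
    rw [hχ]
    calc (∫ t in (0:ℝ)..1, ζ ((ξ : ℝ) + t * ρ - x))
        = ∫ _t in (0:ℝ)..1, (0:ℝ) :=
          intervalIntegral.integral_congr (fun t ht => by
            rw [Set.uIcc_of_le zero_le_one] at ht
            exact hout ξ hξ t ht)
      _ = 0 := by simp
  -- moment identities as finite sums, for t ∈ [0,1]
  have hmomS : ∀ t : ℝ, t ∈ Set.Icc (0:ℝ) 1 → ∀ j : ℕ, j ≤ 2 →
      ∑ ξ ∈ S, ζ ((ξ : ℝ) - (x - t * ρ)) * ((ξ : ℝ) - (x - t * ρ)) ^ j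
        = if j = 0 then 1 else 0 := by
    intro t ht j hj
    rw [← hmom (x - t * ρ) j hj]
    refine (tsum_eq_sum fun ξ hξ => ?_).symm
    rw [show (ξ : ℝ) - (x - t * ρ) = (ξ : ℝ) + t * ρ - x by ring,
      hout ξ hξ t ht, zero_mul]
  -- reduce the tsum to a finite sum
  rw [tsum_eq_sum (s := S) (fun ξ hξ => by rw [hχ0 ξ hξ, mul_zero])]
  -- swap sum and integral
  have h1 : ∑ ξ ∈ S, ((ξ : ℝ) - x + ρ / 2) * ((ξ : ℝ) - x) * χ ξ ρ x
      = ∫ t in (0:ℝ)..1, ∑ ξ ∈ S,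
          ((ξ : ℝ) - x + ρ / 2) * ((ξ : ℝ) - x) * ζ ((ξ : ℝ) + t * ρ - x) := by
    rw [intervalIntegral.integral_finset_sum]
    · refine Finset.sum_congr rfl fun ξ _ => ?_
      rw [hχ, intervalIntegral.integral_const_mul]
    · intro ξ _
      exact (continuous_const.mul (hζc.comp (by continuity))).intervalIntegrable _ _
  rw [h1]
  -- compute the integrand pointwise on [0,1]
  have h2 : ∀ t ∈ Set.uIcc (0:ℝ) 1,
      (∑ ξ ∈ S, ((ξ : ℝ) - x + ρ / 2) * ((ξ : ℝ) - x) * ζ ((ξ : ℝ) + t * ρ - x))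
        = ρ ^ 2 * t ^ 2 - ρ ^ 2 / 2 * t := by
    intro t ht
    rw [Set.uIcc_of_le zero_le_one] at ht
    have e0 := hmomS t ht 0 (by norm_num)
    have e1 := hmomS t ht 1 (by norm_num)
    have e2 := hmomS t ht 2 (by norm_num)
    rw [if_pos rfl] at e0
    rw [if_neg one_ne_zero] at e1
    rw [if_neg (by norm_num)] at e2
    have expand : ∀ ξ ∈ S,
        ((ξ : ℝ) - x + ρ / 2) * ((ξ : ℝ) - x) * ζ ((ξ : ℝ) + t * ρ - x)
          = ζ ((ξ : ℝ) - (x - t * ρ)) * ((ξ : ℝ) - (x - t * ρ)) ^ 2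
            + (ρ / 2 - 2 * t * ρ) * (ζ ((ξ : ℝ) - (x - t * ρ)) * ((ξ : ℝ) - (x - t * ρ)) ^ 1)
            + (ρ ^ 2 * t ^ 2 - ρ ^ 2 / 2 * t) * (ζ ((ξ : ℝ) - (x - t * ρ)) * ((ξ : ℝ) - (x - t * ρ)) ^ 0) := by
      intro ξ _
      rw [show (ξ : ℝ) + t * ρ - x = (ξ : ℝ) - (x - t * ρ) by ring]
      ring
    rw [Finset.sum_congr rfl expand, Finset.sum_add_distrib, Finset.sum_add_distrib,
      ← Finset.mul_sum, ← Finset.mul_sum, e0, e1, e2]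
    ring
  rw [intervalIntegral.integral_congr h2,
    intervalIntegral.integral_sub (f := fun t : ℝ => ρ ^ 2 * t ^ 2) (g := fun t : ℝ => ρ ^ 2 / 2 * t)
      ((continuous_const.mul (continuous_pow 2) : Continuous fun t : ℝ => ρ ^ 2 * t ^ 2).intervalIntegrable _ _)
      ((continuous_const.mul continuous_id' : Continuous fun t : ℝ => ρ ^ 2 / 2 * t).intervalIntegrable _ _)]
  rw [intervalIntegral.integral_const_mul, intervalIntegral.integral_const_mul,
    integral_pow, integral_id]
  norm_num
  ring
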